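/- Let a ∈ V^k and b ∈ W^{k'} be tuples over sets V and W. Then stp(a,a) = stp(b,b) if and only if there exists a bijection π from the set S(a) of slices of a to the set S(b) of slices of b such that stp(a,s) = stp(b,π(s)) for all slices s of a. -/

import Mathlib

/-- The similarity type of two tuples (represented as lists). -/
def stpL {V : Type*} (x y : List V) : Set (ℕ × ℕ) :=
  {p | ∃ (h1 : p.1 < x.length) (h2 : p.2 < y.length), x.get ⟨p.1, h1⟩ = y.get ⟨p.2, h2⟩}

/-- `s` is a slice of `t`: nonempty, pairwise distinct entries, entries among those of `t`. -/
def sliceOf {V : Type*} (s t : List V) : Prop :=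
  s ≠ [] ∧ s.Nodup ∧ ∀ x ∈ s, x ∈ t

theorem stmt5 {V W : Type*} (a : List V) (b : List W) :
    stpL a a = stpL b b ↔
      ∃ π : {s : List V // sliceOf s a} → {t : List W // sliceOf t b},
        Function.Bijective π ∧ ∀ s, stpL a s.val = stpL b (π s).val := by
  classical
  constructor
  · intro h
    -- lengths are equal
    have hlen : a.length = b.length := by
      have h1 : ∀ i, i < a.length ↔ i < b.length := by
        intro i
        constructor
        · intro hi
          have : (i, i) ∈ stpL a a := ⟨hi, hi, rfl⟩
          rw [h] at this
          exact this.1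
        · intro hi
          have : (i, i) ∈ stpL b b := ⟨hi, hi, rfl⟩
          rw [← h] at this
          exact this.1
      rcases Nat.lt_trichotomy a.length b.length with h' | h' | h'
      · have := (h1 a.length).mpr h'; omega
      · exact h'
      · have := (h1 b.length).mp h'; omega
    -- same equality pattern
    have hpat : ∀ (i j : ℕ) (hi : i < a.length) (hj : j < a.length),
        a.get ⟨i, hi⟩ = a.get ⟨j, hj⟩ ↔
          b.get ⟨i, hlen ▸ hi⟩ = b.get ⟨j, hlen ▸ hj⟩ := by
      intro i j hi hj
      constructor
      · intro he
        have : (i, j) ∈ stpL a a := ⟨hi, hj, he⟩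
        rw [h] at this
        obtain ⟨h1, h2, he'⟩ := this
        exact he'
      · intro he
        have : (i, j) ∈ stpL b b := ⟨hlen ▸ hi, hlen ▸ hj, he⟩
        rw [← h] at this
        obtain ⟨h1, h2, he'⟩ := this
        exact he'
    by_cases ha : a = []
    · -- empty case: both slice types are empty
      have hb : b = [] := by
        apply List.length_eq_zero_iff.mp
        rw [← hlen, ha]
        rfl
      have e1 : IsEmpty {s : List V // sliceOf s a} := by
        constructor
        rintro ⟨s, hne, _, hsub⟩
        cases s with
        | nil => exact hne rfl
        | cons x l =>
          have := hsub x (by simp)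
          rw [ha] at this
          simp at this
      have e2 : IsEmpty {t : List W // sliceOf t b} := by
        constructor
        rintro ⟨t, hne, _, hsub⟩
        cases t with
        | nil => exact hne rfl
        | cons x l =>
          have := hsub x (by simp)
          rw [hb] at this
          simp at this
      refine ⟨fun s => e1.elim s, ⟨fun s => e1.elim s, fun t => e2.elim t⟩,
        fun s => e1.elim s⟩
    · have hbne : b ≠ [] := by
        intro hb
        apply ha
        apply List.length_eq_zero_iff.mp
        rw [hlen, hb]
        rfl
      -- construct F : V → W matching a to b
      obtain ⟨F, hFkey⟩ : ∃ F : V → W, ∀ (i : Fin a.length),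
          F (a.get i) = b.get ⟨i.1, hlen ▸ i.2⟩ := by
        refine ⟨fun v => if hv : v ∈ a then
          b.get ⟨(List.mem_iff_get.mp hv).choose.1,
            lt_of_lt_of_eq (List.mem_iff_get.mp hv).choose.2 hlen⟩
          else b.head hbne, ?_⟩
        intro i
        have hv : a.get i ∈ a := a.get_mem _
        simp only [dif_pos hv]
        have hspec := (List.mem_iff_get.mp hv).choose_spec
        exact (hpat _ _ (List.mem_iff_get.mp hv).choose.2 i.2).mp hspec
      -- construct G : W → V matching b to a
      obtain ⟨G, hGkey⟩ : ∃ G : W → V, ∀ (j : Fin b.length),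
          G (b.get j) = a.get ⟨j.1, lt_of_lt_of_eq j.2 hlen.symm⟩ := by
        refine ⟨fun w => if hw : w ∈ b then
          a.get ⟨(List.mem_iff_get.mp hw).choose.1,
            lt_of_lt_of_eq (List.mem_iff_get.mp hw).choose.2 hlen.symm⟩
          else a.head ha, ?_⟩
        intro j
        have hw : b.get j ∈ b := b.get_mem _
        simp only [dif_pos hw]
        have hspec := (List.mem_iff_get.mp hw).choose_spec
        exact (hpat _ _ (lt_of_lt_of_eq (List.mem_iff_get.mp hw).choose.2 hlen.symm)
          (lt_of_lt_of_eq j.2 hlen.symm)).mpr hspec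
      have hGF : ∀ v ∈ a, G (F v) = v := by
        intro v hv
        obtain ⟨i, rfl⟩ := List.mem_iff_get.mp hv
        rw [hFkey i]
        exact hGkey _
      have hFG : ∀ w ∈ b, F (G w) = w := by
        intro w hw
        obtain ⟨j, rfl⟩ := List.mem_iff_get.mp hw
        rw [hGkey j]
        exact hFkey _
      have hFmem : ∀ v ∈ a, F v ∈ b := by
        intro v hv
        obtain ⟨i, rfl⟩ := List.mem_iff_get.mp hv
        rw [hFkey i]
        exact b.get_mem _
      have hGmem : ∀ w ∈ b, G w ∈ a := by
        intro w hw
        obtain ⟨j, rfl⟩ := List.mem_iff_get.mp hw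
        rw [hGkey j]
        exact a.get_mem _
      have mapGF : ∀ (l : List V), (∀ x ∈ l, x ∈ a) → (l.map F).map G = l := by
        intro l hl
        induction l with
        | nil => simp
        | cons x l ih =>
          simp only [List.map_cons]
          rw [hGF x (hl x (by simp)), ih (fun y hy => hl y (by simp [hy]))]
      have mapFG : ∀ (l : List W), (∀ x ∈ l, x ∈ b) → (l.map G).map F = l := by
        intro l hl
        induction l with
        | nil => simp
        | cons x l ih =>
          simp only [List.map_cons]
          rw [hFG x (hl x (by simp)), ih (fun y hy => hl y (by simp [hy]))]
      -- the map on slices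
      refine ⟨fun s => ⟨s.val.map F, ?_, ?_, ?_⟩, ?_, ?_⟩
      · simp [s.2.1]
      · apply List.Nodup.map_on ?_ s.2.2.1
        intro x hx y hy hxy
        have := congrArg G hxy
        rwa [hGF x (s.2.2.2 x hx), hGF y (s.2.2.2 y hy)] at this
      · intro w hw
        obtain ⟨v, hv, rfl⟩ := List.mem_map.mp hw
        exact hFmem v (s.2.2.2 v hv)
      · -- bijectivity via explicit inverse
        apply Function.bijective_iff_has_inverse.mpr
        refine ⟨fun t => ⟨t.val.map G, ?_, ?_, ?_⟩, ?_, ?_⟩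
        · simp [t.2.1]
        · apply List.Nodup.map_on ?_ t.2.2.1
          intro x hx y hy hxy
          have := congrArg F hxy
          rwa [hFG x (t.2.2.2 x hx), hFG y (t.2.2.2 y hy)] at this
        · intro v hv
          obtain ⟨w, hw, rfl⟩ := List.mem_map.mp hv
          exact hGmem w (t.2.2.2 w hw)
        · intro s
          apply Subtype.ext
          exact mapGF s.val s.2.2.2
        · intro t
          apply Subtype.ext
          exact mapFG t.val t.2.2.2
      · -- stp condition
        intro s
        ext ⟨i, j⟩
        simp only [stpL, Set.mem_setOf_eq, List.length_map]
        constructor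
        · rintro ⟨h1, h2, he⟩
          refine ⟨hlen ▸ h1, h2, ?_⟩
          calc b.get ⟨i, hlen ▸ h1⟩ = F (a.get ⟨i, h1⟩) := (hFkey ⟨i, h1⟩).symm
            _ = F (s.val.get ⟨j, h2⟩) := by rw [he]
            _ = (s.val.map F).get ⟨j, by simpa using h2⟩ := by
                  simp
        · rintro ⟨h1, h2, he⟩
          have h1' : i < a.length := hlen ▸ h1
          refine ⟨h1', h2, ?_⟩
          have he2 : F (a.get ⟨i, h1'⟩) = F (s.val.get ⟨j, h2⟩) := by
            rw [hFkey ⟨i, h1'⟩]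
            simpa using he
          have := congrArg G he2
          rwa [hGF _ (a.get_mem _), hGF _ (s.2.2.2 _ (s.val.get_mem _))] at this
  · -- backward direction
    rintro ⟨π, ⟨hinj, hsurj⟩, hstp⟩
    -- matched slices have equal length
    have len_eq : ∀ (s : List V) (t : List W), sliceOf s a → sliceOf t b →
        stpL a s = stpL b t → s.length = t.length := by
      intro s t hs ht hst
      have h1 : ∀ n, n < s.length → n < t.length := by
        intro n hn
        have hmem : s.get ⟨n, hn⟩ ∈ a := hs.2.2 _ (s.get_mem _)
        obtain ⟨m, hm⟩ := List.mem_iff_get.mp hmem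
        have : ((m : ℕ), n) ∈ stpL a s := ⟨m.2, hn, hm⟩
        rw [hst] at this
        exact this.2.choose
      have h2 : ∀ n, n < t.length → n < s.length := by
        intro n hn
        have hmem : t.get ⟨n, hn⟩ ∈ b := ht.2.2 _ (t.get_mem _)
        obtain ⟨m, hm⟩ := List.mem_iff_get.mp hmem
        have : ((m : ℕ), n) ∈ stpL b t := ⟨m.2, hn, hm⟩
        rw [← hst] at this
        exact this.2.choose
      rcases Nat.lt_trichotomy s.length t.length with h' | h' | h'
      · have := h2 s.length h'; omega
      · exact h'
      · have := h1 t.length h'; omega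
    ext ⟨i, j⟩
    simp only [stpL, Set.mem_setOf_eq]
    constructor
    · rintro ⟨hi, hj, he⟩
      -- use the singleton slice [a_i]
      have hs : sliceOf [a.get ⟨i, hi⟩] a := by
        refine ⟨by simp, by simp, ?_⟩
        intro x hx
        simp at hx
        subst hx
        exact a.get_mem _
      set t := π ⟨_, hs⟩ with ht
      have hst := hstp ⟨_, hs⟩
      have hlen1 : t.val.length = 1 := by
        have := len_eq _ _ hs t.2 hst
        simpa using this.symm
      obtain ⟨w, hw⟩ := List.length_eq_one_iff.mp hlen1
      rw [← ht, hw] at hst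
      have m1 : ((i : ℕ), 0) ∈ stpL a [a.get ⟨i, hi⟩] := ⟨hi, by simp, by simp⟩
      have m2 : ((j : ℕ), 0) ∈ stpL a [a.get ⟨i, hi⟩] :=
        ⟨hj, by simp, by simpa using he.symm⟩
      rw [hst] at m1 m2
      obtain ⟨hi', _, he1⟩ := m1
      obtain ⟨hj', _, he2⟩ := m2
      refine ⟨hi', hj', ?_⟩
      simp only [List.get_cons_zero] at he1 he2
      rw [he1, he2]
    · rintro ⟨hi, hj, he⟩
      -- use surjectivity onto the singleton slice [b_i]
      have ht0 : sliceOf [b.get ⟨i, hi⟩] b := by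
        refine ⟨by simp, by simp, ?_⟩
        intro x hx
        simp at hx
        subst hx
        exact b.get_mem _
      obtain ⟨s, hsval⟩ := hsurj ⟨_, ht0⟩
      have hst := hstp s
      rw [hsval] at hst
      have hlen1 : s.val.length = 1 := by
        have := len_eq _ _ s.2 ht0 hst
        simpa using this
      obtain ⟨v, hv⟩ := List.length_eq_one_iff.mp hlen1
      rw [hv] at hst
      have m1 : ((i : ℕ), 0) ∈ stpL b [b.get ⟨i, hi⟩] := ⟨hi, by simp, by simp⟩
      have m2 : ((j : ℕ), 0) ∈ stpL b [b.get ⟨i, hi⟩] :=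
        ⟨hj, by simp, by simpa using he.symm⟩
      rw [← hst] at m1 m2
      obtain ⟨hi', _, he1⟩ := m1
      obtain ⟨hj', _, he2⟩ := m2
      refine ⟨hi', hj', ?_⟩
      simp only [List.get_cons_zero] at he1 he2
      rw [he1, he2]
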